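/- Let p = ((T,r), λ, X) be a simple well-designed pattern tree and let t be a non-root node of T. Let T_t denote the subtree of T rooted at t, branch(t) the set of nodes on the path from r to the parent of t, and let p' be the pattern tree obtained from p by removing the subtree T_t. Then (var(T_t) ∩ X) \ (var(branch(t)) ∩ X) ≠ ∅ (i.e., t is relevant) if and only if there exists a database D such that p(D) ≠ p'(D). -/

import Mathlib

namespace PTEval

/-- A relational signature: a type of relation symbols, each with an arity. -/
structure Sig where
  Rel : Type
  ar : Rel → ℕ

/-- A relational atom over signature `σ` with variables from `V`. -/
structure Atom (σ : Sig) (V : Type) where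
  R : σ.Rel
  args : Fin (σ.ar R) → V

/-- A σ-structure (database) whose domain is the whole type `A`. -/
structure Db (σ : Sig) (A : Type) where
  rel : ∀ R : σ.Rel, Set (Fin (σ.ar R) → A)

/-- The set of variables occurring in an atom. -/
def Atom.vars {σ : Sig} {V : Type} (τ : Atom σ V) : Set V :=
  Set.range τ.args

/-- The set of variables occurring in a set of atoms. -/
def varsOf {σ : Sig} {V : Type} (𝒜 : Set (Atom σ V)) : Set V :=
  ⋃ τ ∈ 𝒜, τ.vars

/-- The mapping `μ` sends the atom `τ` to a fact of the database `D`. -/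
def satAtom {σ : Sig} {V A : Type} (μ : V → A) (D : Db σ A) (τ : Atom σ V) : Prop :=
  (fun i => μ (τ.args i)) ∈ D.rel τ.R

/-- The mapping `μ`, with domain of definition `dμ`, maps the set of atoms `𝒜`
into the database `D` (written `μ : 𝒜 → D` in the paper). -/
def mapsInto {σ : Sig} {V A : Type} (dμ : Set V) (μ : V → A) (𝒜 : Set (Atom σ V))
    (D : Db σ A) : Prop :=
  varsOf 𝒜 ⊆ dμ ∧ ∀ τ ∈ 𝒜, satAtom μ D τ

/-- A rooted tree on the type of nodes `N`, presented by its parent function: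
the root is a fixed point of `parent` and every node reaches the root by
iterating `parent`. -/
structure RootedTree (N : Type) where
  root : N
  parent : N → N
  parent_root : parent root = root
  reaches_root : ∀ v : N, ∃ n : ℕ, parent^[n] v = root

/-- `a` is an ancestor of `b` in `T` (possibly `a = b`), i.e. `a` lies on the
path from the root to `b`. -/
def RootedTree.anc {N : Type} (T : RootedTree N) (a b : N) : Prop :=
  ∃ n : ℕ, T.parent^[n] b = a

/-- A subtree of `T` containing the root: a set of nodes containing the root
and closed under taking parents. -/
def RootedTree.IsRootedSubtree {N : Type} (T : RootedTree N) (S : Set N) : Prop :=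
  T.root ∈ S ∧ ∀ v ∈ S, T.parent v ∈ S

/-- `t` is a child of the rooted subtree `S`: it is outside `S` but its parent
belongs to `S`. -/
def RootedTree.IsChildOf {N : Type} (T : RootedTree N) (S : Set N) (t : N) : Prop :=
  t ∉ S ∧ T.parent t ∈ S

/-- The set of nodes `S` induces a connected subgraph of the tree `T`:
it is empty, or it has a topmost node `top` which is an ancestor of all its
members and `S` contains every node between `top` and any of its members. -/
def RootedTree.IsConnectedSet {N : Type} (T : RootedTree N) (S : Set N) : Prop :=
  S = ∅ ∨ ∃ top ∈ S, ∀ s ∈ S, T.anc top s ∧ ∀ v : N, T.anc top v → T.anc v s → v ∈ S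

/-- The set of atoms labelling a set of nodes, `λ(T')`. -/
def lamOf {σ : Sig} {V N : Type} (lam : N → Set (Atom σ V)) (S : Set N) : Set (Atom σ V) :=
  ⋃ t ∈ S, lam t

/-- The set of variables appearing in the labels of a set of nodes, `var(T')`. -/
def varsLam {σ : Sig} {V N : Type} (lam : N → Set (Atom σ V)) (S : Set N) : Set V :=
  varsOf (lamOf lam S)

/-- `S` is a subtree of `T` containing the root that witnesses that `μ`
(with domain of definition `dμ`) is a pp-solution of `((T,r),λ)` over `D`:
`var(S) = dom(μ)` and `μ : λ(S) → D`. -/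
def ppWitness {σ : Sig} {V N A : Type} (T : RootedTree N) (lam : N → Set (Atom σ V))
    (D : Db σ A) (dμ : Set V) (μ : V → A) (S : Set N) : Prop :=
  T.IsRootedSubtree S ∧ varsLam lam S = dμ ∧ mapsInto dμ μ (lamOf lam S) D

/-- Relativized pp-witness: `S` is a subtree of `T` containing the root, using
only nodes from the set `U` (the nodes of the — possibly pruned — pattern
tree), with `var(S) = dν` and `ν : λ(S) → D`. -/
def ppWitnessIn {σ : Sig} {V N A : Type} (T : RootedTree N) (lam : N → Set (Atom σ V))
    (U : Set N) (D : Db σ A) (dν : Set V) (ν : V → A) (S : Set N) : Prop :=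
  S ⊆ U ∧ T.IsRootedSubtree S ∧ varsLam lam S = dν ∧ mapsInto dν ν (lamOf lam S) D

/-- `ν` (with domain of definition `dν`) is a solution, over `D`, of the
projection-free pattern tree obtained by restricting `(T,λ)` to the node set
`U`: `ν` is a pp-solution with maximal witnessing subtree `S = T_ν`, and no
child (within `U`) of `T_ν` admits a homomorphism of its label into `D`
agreeing with `ν` on the shared variables. -/
def isSolutionIn {σ : Sig} {V N A : Type} (T : RootedTree N) (lam : N → Set (Atom σ V))
    (U : Set N) (D : Db σ A) (dν : Set V) (ν : V → A) : Prop :=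
  ∃ S : Set N, ppWitnessIn T lam U D dν ν S ∧
    (∀ S' : Set N, ppWitnessIn T lam U D dν ν S' → S' ⊆ S) ∧
    ∀ t ∈ U, t ∉ S → T.parent t ∈ S →
      ¬ ∃ g : V → A, (∀ τ ∈ lam t, satAtom g D τ) ∧
        ∀ v ∈ varsOf (lam t) ∩ dν, g v = ν v

/-- `μ` (a partial mapping with domain of definition `dm ⊆ X`) belongs to the
evaluation, over `D`, of the pattern tree with free variables `X` obtained by
restricting `(T,λ)` to the node set `U`; i.e. `μ` is the restriction to `X` of
some solution of the corresponding projection-free tree. -/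
def inEvalIn {σ : Sig} {V N A : Type} (T : RootedTree N) (lam : N → Set (Atom σ V))
    (X : Set V) (U : Set N) (D : Db σ A) (dm : Set V) (μ : V → A) : Prop :=
  ∃ (dν : Set V) (ν : V → A), isSolutionIn T lam U D dν ν ∧
    dm = dν ∩ X ∧ ∀ v ∈ dm, ν v = μ v

-- ===================== auxiliary lemmas =====================
section Aux
variable {σ : Sig} {N V A : Type}

lemma RootedTree.anc_refl (T : RootedTree N) (a : N) : T.anc a a := ⟨0, rfl⟩

lemma RootedTree.anc_trans (T : RootedTree N) {a b c : N} (h1 : T.anc a b) (h2 : T.anc b c) :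
    T.anc a c := by
  obtain ⟨n, hn⟩ := h1; obtain ⟨m, hm⟩ := h2
  exact ⟨n + m, by rw [Function.iterate_add_apply, hm, hn]⟩

lemma RootedTree.eq_root_of_periodic (T : RootedTree N) {v : N} {k : ℕ} (hk : k ≠ 0)
    (h : T.parent^[k] v = v) : v = T.root := by
  obtain ⟨m, hm⟩ := T.reaches_root v
  have hiter : ∀ j, T.parent^[k * j] v = v := by
    intro j; induction j with
    | zero => simp
    | succ j ih => rw [Nat.mul_succ, Function.iterate_add_apply, h, ih]
  have hle : m ≤ k * m := Nat.le_mul_of_pos_left m (Nat.pos_of_ne_zero hk)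
  calc v = T.parent^[k * m] v := (hiter m).symm
    _ = T.parent^[k * m - m] (T.parent^[m] v) := by
        rw [← Function.iterate_add_apply, Nat.sub_add_cancel hle]
    _ = T.root := by rw [hm, Function.iterate_fixed T.parent_root]

lemma RootedTree.anc_antisymm (T : RootedTree N) {a b : N} (h1 : T.anc a b) (h2 : T.anc b a) :
    a = b := by
  obtain ⟨n, hn⟩ := h1; obtain ⟨m, hm⟩ := h2
  rcases Nat.eq_zero_or_pos n with h0 | hpos
  · rw [h0] at hn; exact hn.symm
  · have hper : T.parent^[m + n] b = b := by rw [Function.iterate_add_apply, hn, hm]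
    have hb : b = T.root := T.eq_root_of_periodic (by omega) hper
    subst hb
    rw [Function.iterate_fixed T.parent_root] at hn
    exact hn.symm

lemma RootedTree.not_anc_root (T : RootedTree N) {t : N} (ht : t ≠ T.root) :
    ¬ T.anc t T.root := by
  rintro ⟨n, hn⟩
  rw [Function.iterate_fixed T.parent_root] at hn
  exact ht hn.symm

lemma RootedTree.not_anc_parent_self (T : RootedTree N) {t : N} (ht : t ≠ T.root) :
    ¬ T.anc t (T.parent t) := by
  rintro ⟨n, hn⟩
  exact ht (T.eq_root_of_periodic (Nat.succ_ne_zero n)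
    (by rw [Function.iterate_succ_apply, hn]))

lemma RootedTree.anc_of_anc_parent (T : RootedTree N) {t v : N} (h : T.anc t (T.parent v)) :
    T.anc t v := by
  obtain ⟨n, hn⟩ := h
  exact ⟨n + 1, by rw [Function.iterate_succ_apply]; exact hn⟩

lemma subtree_iterate {T : RootedTree N} {S : Set N} (hS : T.IsRootedSubtree S) {v : N}
    (hv : v ∈ S) : ∀ n, T.parent^[n] v ∈ S := by
  intro n; induction n with
  | zero => exact hv
  | succ n ih => rw [Function.iterate_succ_apply']; exact hS.2 _ ih

lemma mem_lamOf {lam : N → Set (Atom σ V)} {S : Set N} {τ : Atom σ V} :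
    τ ∈ lamOf lam S ↔ ∃ s ∈ S, τ ∈ lam s := by simp [lamOf]

lemma mem_varsOf {𝒜 : Set (Atom σ V)} {y : V} :
    y ∈ varsOf 𝒜 ↔ ∃ τ ∈ 𝒜, y ∈ τ.vars := by simp [varsOf]

lemma mem_varsLam {lam : N → Set (Atom σ V)} {S : Set N} {y : V} :
    y ∈ varsLam lam S ↔ ∃ s ∈ S, ∃ τ ∈ lam s, y ∈ τ.vars := by
  simp [varsLam, varsOf, lamOf]

lemma varsLam_mono {lam : N → Set (Atom σ V)} {S₁ S₂ : Set N} (h : S₁ ⊆ S₂) :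
    varsLam lam S₁ ⊆ varsLam lam S₂ := by
  intro y hy
  rw [mem_varsLam] at hy ⊢
  obtain ⟨s, hs, hτ⟩ := hy
  exact ⟨s, h hs, hτ⟩

lemma lamOf_mono {lam : N → Set (Atom σ V)} {S₁ S₂ : Set N} (h : S₁ ⊆ S₂) :
    lamOf lam S₁ ⊆ lamOf lam S₂ := by
  intro τ hτ
  rw [mem_lamOf] at hτ ⊢
  obtain ⟨s, hs, h'⟩ := hτ
  exact ⟨s, h hs, h'⟩

lemma varsLam_union {lam : N → Set (Atom σ V)} {S₁ S₂ : Set N} :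
    varsLam lam (S₁ ∪ S₂) = varsLam lam S₁ ∪ varsLam lam S₂ := by
  ext y
  simp only [Set.mem_union, mem_varsLam]
  constructor
  · rintro ⟨s, hs | hs, h⟩
    · exact Or.inl ⟨s, hs, h⟩
    · exact Or.inr ⟨s, hs, h⟩
  · rintro (⟨s, hs, h⟩ | ⟨s, hs, h⟩)
    · exact ⟨s, Or.inl hs, h⟩
    · exact ⟨s, Or.inr hs, h⟩

lemma mem_lamOf_union {lam : N → Set (Atom σ V)} {S₁ S₂ : Set N} {τ : Atom σ V}
    (h : τ ∈ lamOf lam (S₁ ∪ S₂)) : τ ∈ lamOf lam S₁ ∨ τ ∈ lamOf lam S₂ := by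
  rw [mem_lamOf] at h
  obtain ⟨s, hs | hs, h'⟩ := h
  · exact Or.inl (mem_lamOf.mpr ⟨s, hs, h'⟩)
  · exact Or.inr (mem_lamOf.mpr ⟨s, hs, h'⟩)

/-- Key consequence of well-designedness: a variable occurring both at a node
below `t` and at a node not below `t` must occur at `parent t`. -/
lemma shared_var {T : RootedTree N} {lam : N → Set (Atom σ V)}
    (hwd : ∀ v : V, T.IsConnectedSet {s : N | v ∈ varsOf (lam s)})
    {t : N} (ht : t ≠ T.root) {y : V} {s1 s2 : N}
    (h1 : y ∈ varsOf (lam s1)) (ha1 : T.anc t s1)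
    (h2 : y ∈ varsOf (lam s2)) (ha2 : ¬ T.anc t s2) :
    y ∈ varsOf (lam (T.parent t)) := by
  rcases hwd y with hemp | ⟨top, htop, hprop⟩
  · exact absurd (show s1 ∈ {s : N | y ∈ varsOf (lam s)} from h1) (by rw [hemp]; simp)
  obtain ⟨hanc1, hbet1⟩ := hprop s1 h1
  obtain ⟨hanc2, -⟩ := hprop s2 h2
  have hnt : ¬ T.anc t top := fun h => ha2 (T.anc_trans h hanc2)
  obtain ⟨m, hm⟩ := hanc1
  obtain ⟨n, hn⟩ := ha1
  have hle : n ≤ m := by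
    by_contra hlt
    push_neg at hlt
    exact hnt ⟨n - m, by rw [← hm, ← Function.iterate_add_apply, Nat.sub_add_cancel hlt.le, hn]⟩
  have hmt : T.parent^[m - n] t = top := by
    rw [← hn, ← Function.iterate_add_apply, Nat.sub_add_cancel hle, hm]
  have hne : m - n ≠ 0 := by
    intro h0
    rw [h0] at hmt
    exact hnt ⟨0, hmt.symm⟩
  have h3 : T.anc top (T.parent t) := ⟨m - n - 1, by
    rw [← Function.iterate_succ_apply, Nat.succ_eq_add_one, Nat.sub_add_cancel (Nat.one_le_iff_ne_zero.mpr hne), hmt]⟩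
  have h4 : T.anc (T.parent t) s1 := ⟨n + 1, by rw [Function.iterate_succ_apply', hn]⟩
  exact hbet1 (T.parent t) h3 h4

end Aux

section Claims
variable {σ : Sig} {N V A : Type}

/-- Claim A: if `t` is irrelevant, every answer of `p` is an answer of `p'`. -/
lemma claimA (T : RootedTree N) (lam : N → Set (Atom σ V)) (X : Set V)
    (hwd : ∀ v : V, T.IsConnectedSet {s : N | v ∈ varsOf (lam s)})
    (t : N) (ht : t ≠ T.root)
    (hsub : varsLam lam {s : N | T.anc t s} ∩ X ⊆
      varsLam lam {s : N | T.anc s t ∧ s ≠ t} ∩ X)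
    (D : Db σ A) (dm : Set V) (μ : V → A)
    (h : inEvalIn T lam X Set.univ D dm μ) :
    inEvalIn T lam X {s : N | ¬ T.anc t s} D dm μ := by
  obtain ⟨dν, ν, ⟨S, ⟨-, hsubtree, hvars, hmap⟩, hmax, hchild⟩, hdm, hval⟩ := h
  set U' : Set N := {s : N | ¬ T.anc t s} with hU'
  set S₀ : Set N := S ∩ U' with hS₀
  set dν₀ : Set V := varsLam lam S₀ with hdν₀
  have hU'closed : ∀ v ∈ U', T.parent v ∈ U' :=
    fun v hv h' => hv (T.anc_of_anc_parent h')
  have hS₀sub : T.IsRootedSubtree S₀ :=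
    ⟨⟨hsubtree.1, T.not_anc_root ht⟩,
     fun v hv => ⟨hsubtree.2 v hv.1, hU'closed v hv.2⟩⟩
  -- if S meets the subtree below t, then parent t ∈ S₀
  have hparent : ∀ s ∈ S, T.anc t s → T.parent t ∈ S₀ := by
    intro s hs ⟨n, hn⟩
    have htS : t ∈ S := hn ▸ subtree_iterate hsubtree hs n
    exact ⟨hsubtree.2 t htS, T.not_anc_parent_self ht⟩
  -- any variable of dν occurring at a node outside the subtree below t lies in dν₀
  have hmain : ∀ y ∈ dν, ∀ s2 : N, y ∈ varsOf (lam s2) → ¬ T.anc t s2 → y ∈ dν₀ := by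
    intro y hy s2 h2 ha2
    rw [← hvars, mem_varsLam] at hy
    obtain ⟨s1, hs1, τ1, hτ1, hyτ⟩ := hy
    by_cases ha1 : T.anc t s1
    · have hpt : y ∈ varsOf (lam (T.parent t)) :=
        shared_var hwd ht (mem_varsOf.mpr ⟨τ1, hτ1, hyτ⟩) ha1 h2 ha2
      rw [hdν₀, mem_varsLam]
      obtain ⟨τ, hτ, hyτ'⟩ := mem_varsOf.mp hpt
      exact ⟨T.parent t, hparent s1 hs1 ha1, τ, hτ, hyτ'⟩
    · rw [hdν₀, mem_varsLam]
      exact ⟨s1, ⟨hs1, ha1⟩, τ1, hτ1, hyτ⟩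
  have hX' : ∀ y ∈ dν, y ∈ X → y ∈ dν₀ := by
    intro y hy hyX
    rw [← hvars, mem_varsLam] at hy
    obtain ⟨s1, hs1, τ1, hτ1, hyτ⟩ := hy
    by_cases ha1 : T.anc t s1
    · have hyTt : y ∈ varsLam lam {s : N | T.anc t s} ∩ X :=
        ⟨mem_varsLam.mpr ⟨s1, ha1, τ1, hτ1, hyτ⟩, hyX⟩
      obtain ⟨hyB, -⟩ := hsub hyTt
      obtain ⟨s2, ⟨hs2t, hs2ne⟩, τ2, hτ2, hyτ2⟩ := mem_varsLam.mp hyB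
      have ha2 : ¬ T.anc t s2 := fun h => hs2ne (T.anc_antisymm hs2t h)
      have hpt : y ∈ varsOf (lam (T.parent t)) :=
        shared_var hwd ht (mem_varsOf.mpr ⟨τ1, hτ1, hyτ⟩) ha1
          (mem_varsOf.mpr ⟨τ2, hτ2, hyτ2⟩) ha2
      rw [hdν₀, mem_varsLam]
      obtain ⟨τ, hτ, hyτ'⟩ := mem_varsOf.mp hpt
      exact ⟨T.parent t, hparent s1 hs1 ha1, τ, hτ, hyτ'⟩
    · rw [hdν₀, mem_varsLam]
      exact ⟨s1, ⟨hs1, ha1⟩, τ1, hτ1, hyτ⟩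
  have hdν₀dν : dν₀ ⊆ dν := by
    rw [hdν₀, ← hvars]; exact varsLam_mono Set.inter_subset_left
  refine ⟨dν₀, ν, ⟨S₀, ?_, ?_, ?_⟩, ?_, hval⟩
  · exact ⟨Set.inter_subset_right, hS₀sub, rfl,
      Set.Subset.rfl, fun τ hτ => hmap.2 τ (lamOf_mono Set.inter_subset_left hτ)⟩
  · -- maximality
    intro S₁ ⟨hS₁U, hS₁sub, hS₁vars, hS₁map⟩
    have hw : ppWitnessIn T lam Set.univ D dν ν (S ∪ S₁) := by
      refine ⟨Set.subset_univ _, ⟨Or.inl hsubtree.1, ?_⟩, ?_, ?_, ?_⟩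
      · rintro v (hv | hv)
        · exact Or.inl (hsubtree.2 v hv)
        · exact Or.inr (hS₁sub.2 v hv)
      · rw [varsLam_union, hvars, hS₁vars]
        exact Set.union_eq_self_of_subset_right hdν₀dν
      · rw [show varsOf (lamOf lam (S ∪ S₁)) = varsLam lam (S ∪ S₁) from rfl,
          varsLam_union, hvars, hS₁vars]
        exact Set.union_subset Set.Subset.rfl hdν₀dν
      · intro τ hτ
        rcases mem_lamOf_union hτ with h' | h'
        · exact hmap.2 τ h'
        · exact hS₁map.2 τ h'
    exact fun x hx => ⟨hmax (S ∪ S₁) hw (Or.inr hx), hS₁U hx⟩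
  · -- child condition
    intro t' ht'U ht'S₀ hpt'
    rintro ⟨g, hg, hagree⟩
    have ht'S : t' ∉ S := fun h => ht'S₀ ⟨h, ht'U⟩
    exact hchild t' (Set.mem_univ t') ht'S hpt'.1
      ⟨g, hg, fun v hv => hagree v ⟨hv.1, hmain v hv.2 t' hv.1 ht'U⟩⟩
  · -- dm equation
    rw [hdm]
    apply Set.Subset.antisymm
    · exact fun y hy => ⟨hX' y hy.1 hy.2, hy.2⟩
    · exact fun y hy => ⟨hdν₀dν hy.1, hy.2⟩

end Claims

section ClaimB
variable {σ : Sig} {N V A : Type}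

/-- Claim B: if `t` is irrelevant, every answer of `p'` is an answer of `p`. -/
lemma claimB [Finite N] (T : RootedTree N) (lam : N → Set (Atom σ V)) (X : Set V)
    (hwd : ∀ v : V, T.IsConnectedSet {s : N | v ∈ varsOf (lam s)})
    (t : N) (ht : t ≠ T.root)
    (hsub : varsLam lam {s : N | T.anc t s} ∩ X ⊆
      varsLam lam {s : N | T.anc s t ∧ s ≠ t} ∩ X)
    (D : Db σ A) (dm : Set V) (μ : V → A)
    (h : inEvalIn T lam X {s : N | ¬ T.anc t s} D dm μ) :
    inEvalIn T lam X Set.univ D dm μ := by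
  obtain ⟨dν', ν', ⟨S', ⟨hS'U, hS'sub, hS'vars, hS'map⟩, hmax', hchild'⟩, hdm, hval⟩ := h
  classical
  set P : Set N → (V → A) → Prop := fun S ν =>
    T.IsRootedSubtree S ∧ (∀ τ ∈ lamOf lam S, satAtom ν D τ) ∧ S' ⊆ S ∧
      ∀ v ∈ dν', ν v = ν' v with hP_def
  set 𝒮 : Set (Set N) := {S : Set N | ∃ ν, P S ν} with h𝒮
  have hS'𝒮 : S' ∈ 𝒮 :=
    ⟨ν', hS'sub, fun τ hτ => hS'map.2 τ hτ, Set.Subset.rfl, fun v _ => rfl⟩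
  obtain ⟨S, hS𝒮, hSmax⟩ :=
    Set.Finite.exists_maximalFor Set.ncard 𝒮 (Set.toFinite 𝒮) ⟨S', hS'𝒮⟩
  obtain ⟨ν, hPsub, hPsat, hPS', hPν'⟩ := hS𝒮
  have hgrow : ∀ (S₂ : Set N) (ν₂ : V → A), P S₂ ν₂ → S ⊆ S₂ → S₂ ⊆ S := by
    intro S₂ ν₂ h2 hss
    have hcard : S.ncard = S₂.ncard :=
      le_antisymm (Set.ncard_le_ncard hss (Set.toFinite S₂))
        (hSmax ⟨ν₂, h2⟩ (Set.ncard_le_ncard hss (Set.toFinite S₂)))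
    rw [Set.eq_of_subset_of_ncard_le hss (le_of_eq hcard.symm) (Set.toFinite S₂)]
  set dν : Set V := varsLam lam S with hdν
  have hdν'dν : dν' ⊆ dν := by rw [hdν, ← hS'vars]; exact varsLam_mono hPS'
  -- no new nodes outside the subtree below t
  have hB2 : ∀ v, v ∈ S → ¬ T.anc t v → v ∈ S' := by
    have key : ∀ n : ℕ, ∀ v : N, T.parent^[n] v = T.root → v ∈ S → ¬ T.anc t v → v ∈ S' := by
      intro n
      induction n with
      | zero => intro v h0 _ _; rw [show v = T.root from h0]; exact hS'sub.1
      | succ n ih =>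
        intro v hit hvS hvU
        by_cases hv' : v ∈ S'
        · exact hv'
        have hpv : T.parent v ∈ S' :=
          ih (T.parent v) (by rw [← Function.iterate_succ_apply]; exact hit)
            (hPsub.2 v hvS) (fun h' => hvU (T.anc_of_anc_parent h'))
        exact absurd
          ⟨ν, fun τ hτ => hPsat τ (mem_lamOf.mpr ⟨v, hvS, hτ⟩),
            fun w hw => hPν' w hw.2⟩
          (hchild' v hvU hv' hpv)
    intro v hvS hvU
    obtain ⟨n, hn⟩ := T.reaches_root v
    exact key n v hn hvS hvU
  have hparent : ∀ s ∈ S, T.anc t s → T.parent t ∈ S' := by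
    intro s hs ⟨n, hn⟩
    have htS : t ∈ S := hn ▸ subtree_iterate hPsub hs n
    exact hB2 (T.parent t) (hPsub.2 t htS) (T.not_anc_parent_self ht)
  have hB3 : dν ∩ X = dν' ∩ X := by
    apply Set.Subset.antisymm
    · rintro y ⟨hy, hyX⟩
      refine ⟨?_, hyX⟩
      rw [hdν, mem_varsLam] at hy
      obtain ⟨s1, hs1, τ1, hτ1, hyτ⟩ := hy
      by_cases ha1 : T.anc t s1
      · have hyTt : y ∈ varsLam lam {s : N | T.anc t s} ∩ X :=
          ⟨mem_varsLam.mpr ⟨s1, ha1, τ1, hτ1, hyτ⟩, hyX⟩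
        obtain ⟨hyB, -⟩ := hsub hyTt
        obtain ⟨s2, ⟨hs2t, hs2ne⟩, τ2, hτ2, hyτ2⟩ := mem_varsLam.mp hyB
        have ha2 : ¬ T.anc t s2 := fun h' => hs2ne (T.anc_antisymm hs2t h')
        have hpt : y ∈ varsOf (lam (T.parent t)) :=
          shared_var hwd ht (mem_varsOf.mpr ⟨τ1, hτ1, hyτ⟩) ha1
            (mem_varsOf.mpr ⟨τ2, hτ2, hyτ2⟩) ha2
        obtain ⟨τ, hτ, hyτ'⟩ := mem_varsOf.mp hpt
        rw [← hS'vars]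
        exact mem_varsLam.mpr ⟨T.parent t, hparent s1 hs1 ha1, τ, hτ, hyτ'⟩
      · rw [← hS'vars]
        exact mem_varsLam.mpr ⟨s1, hB2 s1 hs1 ha1, τ1, hτ1, hyτ⟩
    · exact fun y hy => ⟨hdν'dν hy.1, hy.2⟩
  refine ⟨dν, ν, ⟨S, ?_, ?_, ?_⟩, ?_, ?_⟩
  · exact ⟨Set.subset_univ _, hPsub, rfl, Set.Subset.rfl, hPsat⟩
  · -- maximality
    rintro S₁ ⟨-, hS₁sub, hS₁vars, hS₁map⟩
    have hP2 : P (S ∪ S₁) ν := by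
      refine ⟨⟨Or.inl hPsub.1, ?_⟩, ?_, hPS'.trans Set.subset_union_left, hPν'⟩
      · rintro v (hv | hv)
        · exact Or.inl (hPsub.2 v hv)
        · exact Or.inr (hS₁sub.2 v hv)
      · intro τ hτ
        rcases mem_lamOf_union hτ with h' | h'
        · exact hPsat τ h'
        · exact hS₁map.2 τ h'
    exact Set.subset_union_right.trans (hgrow _ ν hP2 Set.subset_union_left)
  · -- child condition
    intro t' _ ht'S hpt'
    rintro ⟨g, hg, hagree⟩
    set ν₂ : V → A := fun v => if v ∈ dν then ν v else g v with hν₂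
    have hP2 : P (insert t' S) ν₂ := by
      refine ⟨⟨Set.mem_insert_of_mem _ hPsub.1, ?_⟩, ?_, hPS'.trans (Set.subset_insert _ _),
        ?_⟩
      · rintro v (rfl | hv)
        · exact Set.mem_insert_of_mem _ hpt'
        · exact Set.mem_insert_of_mem _ (hPsub.2 v hv)
      · intro τ hτ
        rw [mem_lamOf] at hτ
        obtain ⟨s, hs, hτs⟩ := hτ
        rcases hs with rfl | hsS
        · have heq : (fun i => ν₂ (τ.args i)) = (fun i => g (τ.args i)) := by
            funext i
            by_cases hargs : τ.args i ∈ dν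
            · simp only [hν₂, if_pos hargs]
              exact (hagree (τ.args i)
                ⟨mem_varsOf.mpr ⟨τ, hτs, Set.mem_range_self i⟩, hargs⟩).symm
            · simp only [hν₂, if_neg hargs]
          show (fun i => ν₂ (τ.args i)) ∈ D.rel τ.R
          rw [heq]
          exact hg τ hτs
        · have heq : (fun i => ν₂ (τ.args i)) = (fun i => ν (τ.args i)) := by
            funext i
            have hargs : τ.args i ∈ dν :=
              mem_varsLam.mpr ⟨s, hsS, τ, hτs, Set.mem_range_self i⟩
            simp only [hν₂, if_pos hargs]
          show (fun i => ν₂ (τ.args i)) ∈ D.rel τ.R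
          rw [heq]
          exact hPsat τ (mem_lamOf.mpr ⟨s, hsS, hτs⟩)
      · intro v hv
        simp only [hν₂, if_pos (hdν'dν hv)]
        exact hPν' v hv
    exact ht'S (hgrow _ ν₂ hP2 (Set.subset_insert _ _) (Set.mem_insert _ _))
  · rw [hdm, hB3]
  · intro v hv
    rw [← hval v hv]
    exact hPν' v (by rw [hdm] at hv; exact hv.1)

end ClaimB

/-- Let `p = ((T,r),λ,X)` be a simple well-designed pattern
tree and `t` a non-root node. Let `p'` be obtained from `p` by removing the
subtree rooted at `t` (restricting to the nodes that are not descendants of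
`t`). Then `t` is relevant, i.e.
`(var(T_t) ∩ X) \ (var(branch(t)) ∩ X) ≠ ∅` where `T_t` is the subtree rooted
at `t` and `branch(t)` the set of proper ancestors of `t`, iff there exists a
database `D` with `p(D) ≠ p'(D)`. -/
theorem stmt11 {σ : Sig} {N V : Type} [Finite N]
    (T : RootedTree N) (lam : N → Set (Atom σ V)) (hlamfin : ∀ s : N, (lam s).Finite)
    (X : Set V) (hX : X ⊆ varsLam lam Set.univ)
    -- well-designedness
    (hwd : ∀ v : V, T.IsConnectedSet {s : N | v ∈ varsOf (lam s)})
    -- simplicity: distinct atoms in the (disjointly) labelled tree never share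
    -- a relation symbol, and no atom occurs at two distinct nodes
    (hsimple : ∀ t₁ t₂ : N, ∀ τ₁ ∈ lam t₁, ∀ τ₂ ∈ lam t₂,
      τ₁.R = τ₂.R → τ₁ = τ₂ ∧ t₁ = t₂)
    (t : N) (ht : t ≠ T.root) :
    ((varsLam lam {s : N | T.anc t s} ∩ X) \
        (varsLam lam {s : N | T.anc s t ∧ s ≠ t} ∩ X)).Nonempty ↔
      ∃ (A : Type) (_ : Finite A) (D : Db σ A) (dm : Set V) (μ : V → A),
        ¬ (inEvalIn T lam X Set.univ D dm μ ↔
            inEvalIn T lam X {s : N | ¬ T.anc t s} D dm μ) := by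

  constructor
  · rintro ⟨x, ⟨hxTt, hxX⟩, hxB⟩
    have hxB' : x ∉ varsLam lam {s : N | T.anc s t ∧ s ≠ t} := fun h => hxB ⟨h, hxX⟩
    have hxU : ∀ s2 : N, ¬ T.anc t s2 → x ∉ varsOf (lam s2) := by
      intro s2 ha2 h2
      obtain ⟨s1, ha1, τ1, hτ1, hxτ⟩ := mem_varsLam.mp hxTt
      have hpt := shared_var hwd ht (mem_varsOf.mpr ⟨τ1, hτ1, hxτ⟩) ha1 h2 ha2
      apply hxB'
      obtain ⟨τ, hτ, hxτ'⟩ := mem_varsOf.mp hpt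
      refine mem_varsLam.mpr ⟨T.parent t, ⟨⟨1, by simp⟩, ?_⟩, τ, hτ, hxτ'⟩
      intro hpeq
      exact T.not_anc_parent_self ht ⟨0, hpeq⟩
    refine ⟨Unit, inferInstance, ⟨fun _ => Set.univ⟩,
      varsLam lam Set.univ ∩ X, fun _ => (), ?_⟩
    intro hiff
    have h1 : inEvalIn T lam X Set.univ (⟨fun _ => Set.univ⟩ : Db σ Unit)
        (varsLam lam Set.univ ∩ X) (fun _ => ()) := by
      refine ⟨varsLam lam Set.univ, fun _ => (), ⟨Set.univ, ?_, ?_, ?_⟩, rfl, fun _ _ => rfl⟩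
      · exact ⟨Set.Subset.rfl, ⟨Set.mem_univ _, fun v _ => Set.mem_univ _⟩, rfl,
          Set.Subset.rfl, fun τ _ => Set.mem_univ _⟩
      · exact fun S' _ => Set.subset_univ S'
      · exact fun t' _ ht' _ => absurd (Set.mem_univ t') ht'
    obtain ⟨dν', ν', ⟨S₁, ⟨hS₁U, -, hS₁vars, -⟩, -, -⟩, hdm, -⟩ := hiff.mp h1
    have hx1 : x ∈ varsLam lam Set.univ := varsLam_mono (Set.subset_univ _) hxTt
    have hx2 : x ∈ dν' ∩ X := by rw [← hdm]; exact ⟨hx1, hxX⟩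
    obtain ⟨s, hs, τ, hτ, hxτ⟩ := mem_varsLam.mp (hS₁vars.symm ▸ hx2.1)
    exact hxU s (hS₁U hs) (mem_varsOf.mpr ⟨τ, hτ, hxτ⟩)
  · rintro ⟨A, hA, D, dm, μ, hne⟩
    by_contra hnonem
    have hsub := Set.diff_eq_empty.mp (Set.not_nonempty_iff_eq_empty.mp hnonem)
    exact hne ⟨fun h => claimA T lam X hwd t ht hsub D dm μ h,
      fun h => claimB T lam X hwd t ht hsub D dm μ h⟩


end PTEval
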